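/- arXiv:2311.15255 — 3 statements merged into one kernel-verified Lean document; each statement's English description precedes it below -/
import Mathlib

section
/- Let F be a finite field. Then every maximal independent set of the unitary Cayley graph Γ(M_2(F)) of the ring of 2×2 matrices over F has cardinality exactly |F|². -/
open Pointwise

/-- The unitary Cayley graph of a ring `R`: vertices are elements of `R`,
and `x`, `y` are adjacent iff `x - y` is a unit. -/
def unitaryCayley (R : Type*) [Ring R] : SimpleGraph R where
  Adj x y := x ≠ y ∧ IsUnit (x - y)
  symm := ⟨by
    rintro x y ⟨hne, hu⟩
    exact ⟨hne.symm, by simpa [neg_sub] using hu.neg⟩⟩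
  loopless := ⟨by rintro x ⟨h, -⟩; exact h rfl⟩

/-- A set of vertices is independent if its elements are pairwise nonadjacent. -/
def IsIndepSet {V : Type*} (G : SimpleGraph V) (A : Set V) : Prop :=
  A.Pairwise fun x y => ¬ G.Adj x y

/-- A maximal independent set. -/
def IsMaxIndepSet {V : Type*} (G : SimpleGraph V) (A : Set V) : Prop :=
  IsIndepSet G A ∧ ∀ B : Set V, IsIndepSet G B → A ⊆ B → A = B

/-- A graph is well-covered if all its maximal independent sets have the same cardinality. -/
def WellCovered {V : Type*} (G : SimpleGraph V) : Prop :=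
  ∀ A B : Set V, IsMaxIndepSet G A → IsMaxIndepSet G B → A.ncard = B.ncard

/-- The reduced `k`-diagonal matrix `D_k(a)`:  the `(i, j)` entry is `a (i - k)`
when `j = i + k` (mod `n`) and `i ≠ k`, and `0` otherwise. -/
def Dmat {n : ℕ} (F : Type*) [Field F] (k : Fin n) (a : Fin n → F) :
    Matrix (Fin n) (Fin n) F :=
  Matrix.of fun i j => if i ≠ k ∧ j = i + k then a (i - k) else 0

/-- The family `𝒟` of all reduced diagonal matrices `D_k(a₁, …, a_{n-1})`. -/
def DSet {n : ℕ} (F : Type*) [Field F] : Set (Matrix (Fin n) (Fin n) F) :=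
  {M | ∃ (k : Fin n) (a : Fin n → F), M = Dmat F k a}

/-- The Jacobson radical of a (possibly noncommutative) ring, as a two-sided ideal. -/
noncomputable def jacRad (R : Type*) [Ring R] : TwoSidedIdeal R :=
  (⊥ : TwoSidedIdeal R).jacobson

/-- The quotient of `R` by its Jacobson radical. -/
abbrev JacQuot (R : Type*) [Ring R] := (jacRad R).ringCon.Quotient

/-- The quotient map `R → R/J(R)`. -/
noncomputable def jacMk (R : Type*) [Ring R] : R →+* JacQuot R := (jacRad R).ringCon.mk'

open Matrix

section CrossAux

variable {F : Type*} [Field F]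

def cross2 (u v : Fin 2 → F) : F := u 0 * v 1 - u 1 * v 0

lemma cross2_swap (u v : Fin 2 → F) : cross2 v u = - cross2 u v := by
  simp only [cross2]; ring

lemma vec2_ne_zero_iff {u : Fin 2 → F} : u ≠ 0 ↔ u 0 ≠ 0 ∨ u 1 ≠ 0 := by
  constructor
  · intro h
    by_contra hc
    push_neg at hc
    exact h (funext fun i => by fin_cases i <;> simp [hc.1, hc.2])
  · rintro (h | h) rfl <;> simp at h

lemma cross2_trans {a u b : Fin 2 → F} (hu : u ≠ 0) (h1 : cross2 a u = 0)
    (h2 : cross2 u b = 0) : cross2 a b = 0 := by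
  rcases vec2_ne_zero_iff.mp hu with h | h
  · have hz : u 0 * cross2 a b = 0 := by
      simp only [cross2] at *
      linear_combination b 0 * h1 + a 0 * h2
    rcases mul_eq_zero.mp hz with h' | h'
    · exact absurd h' h
    · exact h'
  · have hz : u 1 * cross2 a b = 0 := by
      simp only [cross2] at *
      linear_combination b 1 * h1 + a 1 * h2
    rcases mul_eq_zero.mp hz with h' | h'
    · exact absurd h' h
    · exact h'

lemma exists_smul_of_cross2 {u v : Fin 2 → F} (hu : u ≠ 0) (h : cross2 u v = 0) :
    ∃ c : F, v = c • u := by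
  simp only [cross2] at h
  rcases vec2_ne_zero_iff.mp hu with h0 | h1
  · refine ⟨v 0 / u 0, funext fun i => ?_⟩
    fin_cases i
    · simp only [Fin.zero_eta, Fin.mk_one, Pi.smul_apply, smul_eq_mul]; field_simp
    · simp only [Fin.zero_eta, Fin.mk_one, Pi.smul_apply, smul_eq_mul]; field_simp
      linear_combination h
  · refine ⟨v 1 / u 1, funext fun i => ?_⟩
    fin_cases i
    · simp only [Fin.zero_eta, Fin.mk_one, Pi.smul_apply, smul_eq_mul]; field_simp
      linear_combination -h
    · simp only [Fin.zero_eta, Fin.mk_one, Pi.smul_apply, smul_eq_mul]; field_simp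

lemma vecMulVec_zero_left (v : Fin 2 → F) : vecMulVec (0 : Fin 2 → F) v = 0 := by
  ext i j; simp [vecMulVec_apply]

lemma vecMulVec_zero_right (u : Fin 2 → F) : vecMulVec u (0 : Fin 2 → F) = 0 := by
  ext i j; simp [vecMulVec_apply]

lemma vecMulVec_smul_comm (c : F) (u v : Fin 2 → F) :
    vecMulVec u (c • v) = vecMulVec (c • u) v := by
  ext i j; simp [vecMulVec_apply]; ring

lemma det_vecMulVec_sub (u v x y : Fin 2 → F) :
    (vecMulVec u v - vecMulVec x y).det = -(cross2 u x * cross2 v y) := by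
  simp [Matrix.det_fin_two, vecMulVec_apply, cross2]; ring

lemma exists_vecMulVec {M : Matrix (Fin 2) (Fin 2) F} (h : M.det = 0) :
    ∃ u v : Fin 2 → F, M = vecMulVec u v := by
  rw [Matrix.det_fin_two] at h
  by_cases h00 : M 0 0 ≠ 0
  · refine ⟨![M 0 0, M 1 0], ![1, M 0 1 / M 0 0], ?_⟩
    ext i j
    fin_cases i <;> fin_cases j
    · simp [vecMulVec_apply]
    · simp [vecMulVec_apply]; field_simp
    · simp [vecMulVec_apply]
    · simp [vecMulVec_apply]; field_simp; linear_combination h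
  · push_neg at h00
    have hbc : M 0 1 = 0 ∨ M 1 0 = 0 := by
      have : M 0 1 * M 1 0 = 0 := by linear_combination -h + M 1 1 * h00
      exact mul_eq_zero.mp this
    rcases hbc with hb | hc
    · refine ⟨![0, 1], ![M 1 0, M 1 1], ?_⟩
      ext i j
      fin_cases i <;> fin_cases j <;> simp [vecMulVec_apply, h00, hb]
    · refine ⟨![M 0 1, M 1 1], ![0, 1], ?_⟩
      ext i j
      fin_cases i <;> fin_cases j <;> simp [vecMulVec_apply, h00, hc]

end CrossAux


section GraphAux

variable {F : Type*} [Field F]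

lemma maxIndep_shift {R : Type*} [Ring R] {A : Set R} (c : R)
    (hA : IsMaxIndepSet (unitaryCayley R) A) :
    IsMaxIndepSet (unitaryCayley R) ((fun x => x + c) '' A) := by
  have hadj : ∀ x y : R, (unitaryCayley R).Adj (x + c) (y + c) ↔ (unitaryCayley R).Adj x y := by
    intro x y
    simp only [unitaryCayley, add_sub_add_right_eq_sub, ne_eq, add_left_inj]
  constructor
  · rintro _ ⟨x, hx, rfl⟩ _ ⟨y, hy, rfl⟩ hne hadj'
    exact hA.1 hx hy (fun h => hne (by rw [h])) ((hadj x y).mp hadj')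
  · intro C hC hsub
    have hC' : IsIndepSet (unitaryCayley R) ((fun x => x - c) '' C) := by
      rintro _ ⟨x, hx, rfl⟩ _ ⟨y, hy, rfl⟩ hne hadj'
      refine hC hx hy (fun h => hne (by rw [h])) ?_
      have := (hadj (x - c) (y - c)).mpr
      rw [sub_add_cancel, sub_add_cancel] at this
      exact this hadj'
    have hAC' : A ⊆ (fun x => x - c) '' C :=
      fun a ha => ⟨a + c, hsub ⟨a, ha, rfl⟩, by simp⟩
    have hAeq := hA.2 _ hC' hAC'
    rw [hAeq, Set.image_image]
    simp only [sub_add_cancel, Set.image_id']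

/-- The set of matrices with column space contained in the span of `u`. -/
def Lset (u : Fin 2 → F) : Set (Matrix (Fin 2) (Fin 2) F) := Set.range (vecMulVec u)

/-- The set of matrices with row space contained in the span of `v`. -/
def Rset (v : Fin 2 → F) : Set (Matrix (Fin 2) (Fin 2) F) :=
  Set.range (fun c => vecMulVec c v)

lemma not_isUnit_of_det_zero {M : Matrix (Fin 2) (Fin 2) F} (h : M.det = 0) : ¬ IsUnit M :=
  fun hu => isUnit_iff_ne_zero.mp ((Matrix.isUnit_iff_isUnit_det M).mp hu) h

lemma indep_Lset (u : Fin 2 → F) :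
    IsIndepSet (unitaryCayley (Matrix (Fin 2) (Fin 2) F)) (Lset u) := by
  rintro _ ⟨a, rfl⟩ _ ⟨b, rfl⟩ hne hadj
  refine not_isUnit_of_det_zero ?_ hadj.2
  rw [det_vecMulVec_sub]
  simp [cross2]
  exact Or.inl (by ring)

lemma indep_Rset (v : Fin 2 → F) :
    IsIndepSet (unitaryCayley (Matrix (Fin 2) (Fin 2) F)) (Rset v) := by
  rintro _ ⟨a, rfl⟩ _ ⟨b, rfl⟩ hne hadj
  refine not_isUnit_of_det_zero ?_ hadj.2
  rw [det_vecMulVec_sub]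
  simp [cross2]
  exact Or.inr (by ring)

lemma ncard_Lset [Fintype F] {u : Fin 2 → F} (hu : u ≠ 0) :
    (Lset u).ncard = Fintype.card F ^ 2 := by
  have hinj : Function.Injective (vecMulVec u : (Fin 2 → F) → Matrix (Fin 2) (Fin 2) F) := by
    intro a b hab
    rcases vec2_ne_zero_iff.mp hu with h | h
    · funext j
      have := congrFun (congrFun hab 0) j
      rw [vecMulVec_apply, vecMulVec_apply] at this
      exact mul_left_cancel₀ h this
    · funext j
      have := congrFun (congrFun hab 1) j
      rw [vecMulVec_apply, vecMulVec_apply] at this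
      exact mul_left_cancel₀ h this
  rw [Lset, ← Nat.card_coe_set_eq, Nat.card_range_of_injective hinj]
  simp [Nat.card_eq_fintype_card]

lemma ncard_Rset [Fintype F] {v : Fin 2 → F} (hv : v ≠ 0) :
    (Rset v).ncard = Fintype.card F ^ 2 := by
  have hinj : Function.Injective (fun c => (vecMulVec c v : Matrix (Fin 2) (Fin 2) F)) := by
    intro a b hab
    simp only at hab
    rcases vec2_ne_zero_iff.mp hv with h | h
    · funext i
      have := congrFun (congrFun hab i) 0
      rw [vecMulVec_apply, vecMulVec_apply] at this
      exact mul_right_cancel₀ h this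
    · funext i
      have := congrFun (congrFun hab i) 1
      rw [vecMulVec_apply, vecMulVec_apply] at this
      exact mul_right_cancel₀ h this
  rw [Rset, ← Nat.card_coe_set_eq, Nat.card_range_of_injective hinj]
  simp [Nat.card_eq_fintype_card]

end GraphAux

theorem stmt1 (F : Type*) [Field F] [Fintype F]
    (A : Set (Matrix (Fin 2) (Fin 2) F))
    (hA : IsMaxIndepSet (unitaryCayley (Matrix (Fin 2) (Fin 2) F)) A) :
    A.ncard = Fintype.card F ^ 2 := by
  classical
  -- A is nonempty
  have hne : A.Nonempty := by
    rcases A.eq_empty_or_nonempty with h | h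
    · exfalso
      have hs : IsIndepSet (unitaryCayley (Matrix (Fin 2) (Fin 2) F)) {0} :=
        Set.pairwise_singleton _ _
      have := hA.2 {0} hs (by rw [h]; exact Set.empty_subset _)
      rw [h] at this
      exact (Set.singleton_nonempty (0 : Matrix (Fin 2) (Fin 2) F)).ne_empty this.symm
    · exact h
  obtain ⟨a₀, ha₀⟩ := hne
  set B := (fun x => x + (-a₀)) '' A with hBdef
  have hB := maxIndep_shift (-a₀) hA
  have h0 : (0 : Matrix (Fin 2) (Fin 2) F) ∈ B := ⟨a₀, ha₀, by simp⟩
  have hcard : A.ncard = B.ncard :=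
    (Set.ncard_image_of_injective A (add_left_injective (-a₀))).symm
  rw [hcard]
  -- key: all pairwise differences in B are singular
  have key : ∀ x ∈ B, ∀ y ∈ B, (x - y).det = 0 := by
    intro x hx y hy
    by_cases hxy : x = y
    · simp [hxy]
    · by_contra hdet
      exact hB.1 hx hy hxy ⟨hxy, (Matrix.isUnit_iff_isUnit_det _).mpr (isUnit_iff_ne_zero.mpr hdet)⟩
  have detmem : ∀ M ∈ B, M.det = 0 := by
    intro M hM
    have := key M hM 0 h0
    simpa using this
  -- structure: B is contained in some Lset or Rset
  have main : (∃ u : Fin 2 → F, u ≠ 0 ∧ B ⊆ Lset u) ∨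
      (∃ v : Fin 2 → F, v ≠ 0 ∧ B ⊆ Rset v) := by
    by_cases hB0 : ∀ M ∈ B, M = (0 : Matrix (Fin 2) (Fin 2) F)
    · left
      refine ⟨![1, 0], ?_, fun M hM => ?_⟩
      · rw [vec2_ne_zero_iff]; left; simp
      · rw [hB0 M hM]
        exact ⟨0, (vecMulVec_zero_right _)⟩
    · push_neg at hB0
      obtain ⟨M₀, hM₀B, hM₀⟩ := hB0
      obtain ⟨u₀, v₀, rfl⟩ := exists_vecMulVec (detmem M₀ hM₀B)
      have hu₀ : u₀ ≠ 0 := fun h => hM₀ (by rw [h, vecMulVec_zero_left])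
      have hv₀ : v₀ ≠ 0 := fun h => hM₀ (by rw [h, vecMulVec_zero_right])
      by_cases hall : B ⊆ Rset v₀
      · right; exact ⟨v₀, hv₀, hall⟩
      · left
        refine ⟨u₀, hu₀, ?_⟩
        obtain ⟨M₁, hM₁B, hM₁⟩ := Set.not_subset.mp hall
        have hM₁0 : M₁ ≠ 0 := fun h => hM₁ ⟨0, by show vecMulVec 0 v₀ = M₁; rw [vecMulVec_zero_left, h]⟩
        obtain ⟨u₁, v₁, rfl⟩ := exists_vecMulVec (detmem M₁ hM₁B)
        have hu₁ : u₁ ≠ 0 := fun h => hM₁0 (by rw [h, vecMulVec_zero_left])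
        have hv₁ : v₁ ≠ 0 := fun h => hM₁0 (by rw [h, vecMulVec_zero_right])
        -- v₁ is not proportional to v₀
        have hcr : cross2 v₀ v₁ ≠ 0 := by
          intro h
          obtain ⟨c, hc⟩ := exists_smul_of_cross2 hv₀ h
          exact hM₁ ⟨c • u₁, by show vecMulVec (c • u₁) v₀ = _; rw [← vecMulVec_smul_comm, ← hc]⟩
        -- hence u₁ is proportional to u₀
        have hu01 : cross2 u₀ u₁ = 0 := by
          have hd := key _ hM₀B _ hM₁B
          rw [det_vecMulVec_sub] at hd
          rcases mul_eq_zero.mp (neg_eq_zero.mp hd) with h | h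
          · exact h
          · exact absurd h hcr
        intro M hMB
        by_cases hM : M = 0
        · exact ⟨0, by rw [vecMulVec_zero_right, hM]⟩
        · obtain ⟨u, v, rfl⟩ := exists_vecMulVec (detmem M hMB)
          have hu : u ≠ 0 := fun h => hM (by rw [h, vecMulVec_zero_left])
          have hv : v ≠ 0 := fun h => hM (by rw [h, vecMulVec_zero_right])
          have h₀ := key _ hMB _ hM₀B
          have h₁ := key _ hMB _ hM₁B
          rw [det_vecMulVec_sub] at h₀ h₁
          have h₀' := mul_eq_zero.mp (neg_eq_zero.mp h₀)
          have h₁' := mul_eq_zero.mp (neg_eq_zero.mp h₁)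
          have hfin : cross2 u u₀ = 0 := by
            rcases h₀' with h | hvv0
            · exact h
            rcases h₁' with h | hvv1
            · -- cross2 u u₁ = 0 and cross2 u₁ u₀ = 0
              have h10 : cross2 u₁ u₀ = 0 := by
                rw [cross2_swap, hu01, neg_zero]
              exact cross2_trans hu₁ h h10
            · -- cross2 v v₀ = 0 and cross2 v v₁ = 0 force cross2 v₀ v₁ = 0
              exfalso
              have h0v : cross2 v₀ v = 0 := by rw [cross2_swap, hvv0, neg_zero]
              exact hcr (cross2_trans hv h0v hvv1)
          obtain ⟨c, hc⟩ := exists_smul_of_cross2 hu₀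
            (by rw [cross2_swap, hfin, neg_zero] : cross2 u₀ u = 0)
          exact ⟨c • v, by rw [vecMulVec_smul_comm, ← hc]⟩
  rcases main with ⟨u, hu, hsub⟩ | ⟨v, hv, hsub⟩
  · have hBL : B = Lset u := hB.2 _ (indep_Lset u) hsub
    rw [hBL]
    exact ncard_Lset hu
  · have hBR : B = Rset v := hB.2 _ (indep_Rset v) hsub
    rw [hBR]
    exact ncard_Rset hv
end

section
/- Let F be a finite field and n a positive integer with n ≤ 2. Then the unitary Cayley graph Γ(M_n(F)) of the ring of n×n matrices over F is well-covered. -/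
open Pointwise

namespace StmtAux

open Matrix

variable {F : Type*} [Field F]

lemma not_adj_of_det_eq_zero {n : ℕ} {M N : Matrix (Fin n) (Fin n) F}
    (h : (M - N).det = 0) : ¬ (unitaryCayley (Matrix (Fin n) (Fin n) F)).Adj M N := by
  rintro ⟨hne, hu⟩
  have h2 := (Matrix.isUnit_iff_isUnit_det _).mp hu
  rw [h] at h2
  exact h2.ne_zero rfl

lemma det_eq_zero_of_not_adj {n : ℕ} {M N : Matrix (Fin n) (Fin n) F}
    (hne : M ≠ N) (h : ¬ (unitaryCayley (Matrix (Fin n) (Fin n) F)).Adj M N) :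
    (M - N).det = 0 := by
  by_contra hd
  exact h ⟨hne, (Matrix.isUnit_iff_isUnit_det _).mpr (isUnit_iff_ne_zero.mpr hd)⟩

lemma indep_singleton {R : Type*} [Ring R] (x : R) :
    IsIndepSet (unitaryCayley R) {x} := Set.pairwise_singleton _ _

lemma nonempty_of_max {R : Type*} [Ring R] {A : Set R}
    (hA : IsMaxIndepSet (unitaryCayley R) A) : A.Nonempty := by
  rcases A.eq_empty_or_nonempty with h | h
  · subst h
    have h2 := hA.2 {0} (indep_singleton 0) (Set.empty_subset _)
    exact absurd h2.symm (Set.singleton_ne_empty 0)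
  · exact h

/-! ### The case `n = 1` -/

lemma adj_one (M N : Matrix (Fin 1) (Fin 1) F) (h : M ≠ N) :
    (unitaryCayley (Matrix (Fin 1) (Fin 1) F)).Adj M N := by
  refine ⟨h, (Matrix.isUnit_iff_isUnit_det _).mpr (isUnit_iff_ne_zero.mpr ?_)⟩
  rw [Matrix.det_fin_one]
  intro h0
  apply h
  ext i j
  fin_cases i
  fin_cases j
  have h1 : (M - N) 0 0 = 0 := h0
  rw [Matrix.sub_apply] at h1
  simpa [sub_eq_zero] using h1

lemma wc_one : WellCovered (unitaryCayley (Matrix (Fin 1) (Fin 1) F)) := by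
  have key : ∀ A, IsMaxIndepSet (unitaryCayley (Matrix (Fin 1) (Fin 1) F)) A →
      A.ncard = 1 := by
    intro A hA
    obtain ⟨x, hx⟩ := nonempty_of_max hA
    rw [Set.ncard_eq_one]
    refine ⟨x, Set.eq_singleton_iff_unique_mem.mpr ⟨hx, fun y hy => ?_⟩⟩
    by_contra hne
    exact hA.1 hy hx hne (adj_one y x hne)
  intro A B hA hB
  rw [key A hA, key B hB]

/-! ### The case `n = 2` -/

/-- Cross product of two vectors in `F²`. -/
def cross (a c : Fin 2 → F) : F := a 0 * c 1 - a 1 * c 0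

lemma cross_self (a : Fin 2 → F) : cross a a = 0 := by simp [cross]; ring

lemma cross_comm (a c : Fin 2 → F) : cross a c = -cross c a := by simp [cross]; ring

lemma cross_smul_left (t : F) (a c : Fin 2 → F) :
    cross (t • a) c = t * cross a c := by simp [cross]; ring

lemma cross_smul_right (t : F) (a c : Fin 2 → F) :
    cross a (t • c) = t * cross a c := by simp [cross]; ring

lemma det_vmv_sub (a b c d : Fin 2 → F) :
    (vecMulVec a b - vecMulVec c d).det = -(cross a c * cross b d) := by
  simp only [Matrix.det_fin_two, Matrix.sub_apply, Matrix.vecMulVec_apply, cross]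
  ring

lemma vmv_smul_left (t : F) (a d : Fin 2 → F) :
    vecMulVec (t • a) d = vecMulVec a (t • d) := by
  ext i j
  simp only [Matrix.vecMulVec_apply, Pi.smul_apply, smul_eq_mul]
  ring

lemma ne_zero_factors {a b : Fin 2 → F} (h : vecMulVec a b ≠ 0) :
    a ≠ 0 ∧ b ≠ 0 := by
  constructor <;> rintro rfl <;> apply h <;> ext i j <;>
    simp [Matrix.vecMulVec_apply]

lemma exists_vmv {M : Matrix (Fin 2) (Fin 2) F} (h : M.det = 0) :
    ∃ a b, M = vecMulVec a b := by
  rw [Matrix.det_fin_two] at h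
  by_cases h00 : M 0 0 = 0
  · have h' : M 0 1 * M 1 0 = 0 := by linear_combination -h + M 1 1 * h00
    rcases mul_eq_zero.mp h' with h01 | h10
    · refine ⟨![0, 1], ![M 1 0, M 1 1], ?_⟩
      ext i j
      fin_cases i <;> fin_cases j <;>
        simp [Matrix.vecMulVec_apply, h00, h01]
    · refine ⟨![M 0 1, M 1 1], ![0, 1], ?_⟩
      ext i j
      fin_cases i <;> fin_cases j <;>
        simp [Matrix.vecMulVec_apply, h00, h10]
  · refine ⟨![M 0 0, M 1 0], ![1, M 0 1 / M 0 0], ?_⟩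
    ext i j
    fin_cases i <;> fin_cases j
    · simp [Matrix.vecMulVec_apply]
    · simp [Matrix.vecMulVec_apply]
      field_simp
    · simp [Matrix.vecMulVec_apply]
    · simp [Matrix.vecMulVec_apply]
      field_simp
      linear_combination h

lemma parallel {a c : Fin 2 → F} (ha : a ≠ 0) (h : cross a c = 0) :
    ∃ t : F, c = t • a := by
  unfold cross at h
  by_cases h0 : a 0 = 0
  · have h1 : a 1 ≠ 0 := fun h1 => ha (by ext i; fin_cases i <;> simp_all)
    have hc0 : c 0 = 0 := by
      have h2 : a 1 * c 0 = 0 := by linear_combination -h + c 1 * h0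
      rcases mul_eq_zero.mp h2 with h' | h'
      · exact absurd h' h1
      · exact h'
    refine ⟨c 1 / a 1, funext fun i => ?_⟩
    fin_cases i
    · show c 0 = c 1 / a 1 * a 0
      rw [hc0, h0, mul_zero]
    · show c 1 = c 1 / a 1 * a 1
      field_simp
  · refine ⟨c 0 / a 0, funext fun i => ?_⟩
    fin_cases i
    · show c 0 = c 0 / a 0 * a 0
      field_simp
    · show c 1 = c 0 / a 0 * a 1
      field_simp
      linear_combination h

lemma key_two {A : Set (Matrix (Fin 2) (Fin 2) F)}
    (hA : IsMaxIndepSet (unitaryCayley (Matrix (Fin 2) (Fin 2) F)) A) :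
    A.ncard = Nat.card (Fin 2 → F) := by
  obtain ⟨x, hx⟩ := nonempty_of_max hA
  have hdet : ∀ a ∈ A, ∀ b ∈ A, a ≠ b → ((a - x) - (b - x)).det = 0 := by
    intro a ha b hb hne
    have h1 : (a - x) - (b - x) = a - b := by abel
    rw [h1]
    exact det_eq_zero_of_not_adj hne (hA.1 ha hb hne)
  have hdet' : ∀ a ∈ A, a ≠ x → (a - x).det = 0 := by
    intro a ha hne
    have := hdet a ha x hx hne
    simpa using this
  -- main classification claim
  have main : ∃ u : Fin 2 → F, u ≠ 0 ∧
      ((∀ a ∈ A, ∃ w, a - x = vecMulVec u w) ∨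
       (∀ a ∈ A, ∃ w, a - x = vecMulVec w u)) := by
    have hone : (![1, 0] : Fin 2 → F) ≠ 0 := by
      intro h
      have := congrFun h 0
      simp at this
    by_cases hS : ∀ a ∈ A, a = x
    · refine ⟨![1, 0], hone, Or.inl fun a ha => ⟨0, ?_⟩⟩
      rw [hS a ha]
      ext i j
      simp [Matrix.vecMulVec_apply]
    · push_neg at hS
      obtain ⟨y, hy, hyx⟩ := hS
      obtain ⟨a, b, hab⟩ := exists_vmv (hdet' y hy hyx)
      have hB0 : vecMulVec a b ≠ 0 := by rw [← hab]; exact sub_ne_zero.mpr hyx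
      obtain ⟨ha0, hb0⟩ := ne_zero_factors hB0
      by_cases hcase : ∀ z ∈ A, ∃ w, z - x = vecMulVec a w
      · exact ⟨a, ha0, Or.inl hcase⟩
      · push_neg at hcase
        obtain ⟨z, hz, hznot⟩ := hcase
        have hzx : z ≠ x := by
          rintro rfl
          refine hznot 0 ?_
          ext i j
          simp [Matrix.vecMulVec_apply]
        obtain ⟨c1, d1, hc1⟩ := exists_vmv (hdet' z hz hzx)
        have hz0 : vecMulVec c1 d1 ≠ 0 := by rw [← hc1]; exact sub_ne_zero.mpr hzx
        obtain ⟨hc10, hd10⟩ := ne_zero_factors hz0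
        have hac1 : cross a c1 ≠ 0 := by
          intro h
          obtain ⟨t, ht⟩ := parallel ha0 h
          exact hznot (t • d1) (by rw [hc1, ht, vmv_smul_left])
        have hyz : y ≠ z := by
          rintro rfl
          exact hznot b hab
        have hbd1 : cross b d1 = 0 := by
          have hd : ((y - x) - (z - x)).det = 0 := hdet y hy z hz hyz
          rw [hab, hc1, det_vmv_sub] at hd
          rcases mul_eq_zero.mp (neg_eq_zero.mp hd) with h | h
          · exact absurd h hac1
          · exact h
        obtain ⟨r, hr⟩ := parallel hb0 hbd1
        have hr0 : r ≠ 0 := by rintro rfl; rw [zero_smul] at hr; exact hd10 hr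
        refine ⟨b, hb0, Or.inr ?_⟩
        intro m hm
        by_cases hmx : m = x
        · refine ⟨0, ?_⟩
          rw [hmx]
          ext i j
          simp [Matrix.vecMulVec_apply]
        by_cases hmy : m = y
        · exact ⟨a, by rw [hmy, hab]⟩
        by_cases hmz : m = z
        · exact ⟨r • c1, by rw [hmz, hc1, hr, ← vmv_smul_left]⟩
        obtain ⟨c, d, hcd⟩ := exists_vmv (hdet' m hm hmx)
        have hm0 : vecMulVec c d ≠ 0 := by rw [← hcd]; exact sub_ne_zero.mpr hmx
        obtain ⟨hc0, hd0⟩ := ne_zero_factors hm0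
        suffices hpar : cross b d = 0 by
          obtain ⟨t, ht⟩ := parallel hb0 hpar
          exact ⟨t • c, by rw [hcd, ht, ← vmv_smul_left]⟩
        -- compare m with y
        have hd1' : ((m - x) - (y - x)).det = 0 := hdet m hm y hy hmy
        rw [hcd, hab, det_vmv_sub] at hd1'
        rcases mul_eq_zero.mp (neg_eq_zero.mp hd1') with hca | hdb
        · -- c parallel to a
          have hac : cross a c = 0 := by rw [cross_comm, hca, neg_zero]
          obtain ⟨s, hs⟩ := parallel ha0 hac
          have hs0 : s ≠ 0 := by rintro rfl; rw [zero_smul] at hs; exact hc0 hs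
          have hd2' : ((m - x) - (z - x)).det = 0 := hdet m hm z hz hmz
          rw [hcd, hc1, det_vmv_sub] at hd2'
          rcases mul_eq_zero.mp (neg_eq_zero.mp hd2') with hcc | hdd
          · rw [hs, cross_smul_left] at hcc
            rcases mul_eq_zero.mp hcc with h | h
            · exact absurd h hs0
            · exact absurd h hac1
          · rw [hr, cross_smul_right] at hdd
            rcases mul_eq_zero.mp hdd with h | h
            · exact absurd h hr0
            · rw [cross_comm, h, neg_zero]
        · rw [cross_comm, hdb, neg_zero]
  obtain ⟨u, hu, hside⟩ := main
  obtain ⟨i0, hi0⟩ : ∃ i, u i ≠ 0 := by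
    by_contra h
    push_neg at h
    exact hu (funext h)
  rcases hside with hcol | hrow
  · set f : (Fin 2 → F) → Matrix (Fin 2) (Fin 2) F := fun w => x + vecMulVec u w with hf
    have hinj : Function.Injective f := by
      intro w w' h
      have h2 : vecMulVec u w = vecMulVec u w' := by
        have := add_left_cancel h
        exact this
      funext j
      have h3 : u i0 * w j = u i0 * w' j := by
        have := congrFun (congrFun h2 i0) j
        simpa [Matrix.vecMulVec_apply] using this
      exact mul_left_cancel₀ hi0 h3
    have hindep : IsIndepSet (unitaryCayley (Matrix (Fin 2) (Fin 2) F)) (Set.range f) := by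
      rintro _ ⟨w, rfl⟩ _ ⟨w', rfl⟩ hne
      apply not_adj_of_det_eq_zero
      have h1 : f w - f w' = vecMulVec u w - vecMulVec u w' := by
        simp only [hf]; abel
      rw [h1, det_vmv_sub, cross_self, zero_mul, neg_zero]
    have hsub : A ⊆ Set.range f := by
      intro a ha
      obtain ⟨w, hw⟩ := hcol a ha
      exact ⟨w, by rw [hf]; simp only [← hw]; abel⟩
    have hAeq : A = Set.range f := hA.2 _ hindep hsub
    rw [hAeq, ← Set.image_univ, Set.ncard_image_of_injective _ hinj, Set.ncard_univ]
  · set f : (Fin 2 → F) → Matrix (Fin 2) (Fin 2) F := fun w => x + vecMulVec w u with hf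
    have hinj : Function.Injective f := by
      intro w w' h
      have h2 : vecMulVec w u = vecMulVec w' u := add_left_cancel h
      funext i
      have h3 : w i * u i0 = w' i * u i0 := by
        have := congrFun (congrFun h2 i) i0
        simpa [Matrix.vecMulVec_apply] using this
      exact mul_right_cancel₀ hi0 h3
    have hindep : IsIndepSet (unitaryCayley (Matrix (Fin 2) (Fin 2) F)) (Set.range f) := by
      rintro _ ⟨w, rfl⟩ _ ⟨w', rfl⟩ hne
      apply not_adj_of_det_eq_zero
      have h1 : f w - f w' = vecMulVec w u - vecMulVec w' u := by
        simp only [hf]; abel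
      rw [h1, det_vmv_sub, cross_self, mul_zero, neg_zero]
    have hsub : A ⊆ Set.range f := by
      intro a ha
      obtain ⟨w, hw⟩ := hrow a ha
      exact ⟨w, by rw [hf]; simp only [← hw]; abel⟩
    have hAeq : A = Set.range f := hA.2 _ hindep hsub
    rw [hAeq, ← Set.image_univ, Set.ncard_image_of_injective _ hinj, Set.ncard_univ]

lemma wc_two : WellCovered (unitaryCayley (Matrix (Fin 2) (Fin 2) F)) := by
  intro A B hA hB
  rw [key_two hA, key_two hB]

end StmtAux

theorem stmt2 (F : Type*) [Field F] [Fintype F] (n : ℕ) (hn : 0 < n) (hn2 : n ≤ 2) :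
    WellCovered (unitaryCayley (Matrix (Fin n) (Fin n) F)) := by
  interval_cases n
  · exact StmtAux.wc_one
  · exact StmtAux.wc_two
end

section
/- Let R be a finite ring with identity and J(R) its Jacobson radical. If A and B are maximal independent sets of the unitary Cayley graph Γ(R), then the cardinality of A ∩ B is a multiple of |J(R)|. -/
open Pointwise

-- auxiliary lemmas

lemma isUnit_one_add_of_mem_jacRad {R : Type*} [Ring R] {x : R} (hx : x ∈ jacRad R) :
    IsUnit (1 + x) := by
  have key : ∀ y : R, y ∈ jacRad R → ∃ z : R, z * (1 + y) = 1 := by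
    intro y hy
    obtain ⟨z, hz⟩ := TwoSidedIdeal.mem_jacobson_iff.1 hy 1
    rw [TwoSidedIdeal.mem_bot, mul_one, sub_eq_zero] at hz
    exact ⟨z, by rw [mul_add, mul_one, add_comm]; exact hz⟩
  obtain ⟨z, hz⟩ := key x hx
  have hzx : -(z * x) ∈ jacRad R := (jacRad R).neg_mem ((jacRad R).mul_mem_left _ _ hx)
  have hz1 : z * x + z = 1 := by
    have := hz; rw [mul_add, mul_one, add_comm] at this; exact this
  have hz' : z = 1 + -(z * x) := by
    rw [← sub_eq_add_neg, eq_sub_iff_add_eq, add_comm]; exact hz1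
  obtain ⟨w, hw⟩ := key _ hzx
  rw [← hz'] at hw
  have hweq : w = 1 + x := by
    calc w = w * (z * (1 + x)) := by rw [hz, mul_one]
    _ = (w * z) * (1 + x) := by rw [mul_assoc]
    _ = 1 + x := by rw [hw, one_mul]
  exact ⟨⟨1 + x, z, by rw [← hweq]; exact hw, hz⟩, rfl⟩

lemma isUnit_add_of_mem_jacRad {R : Type*} [Ring R] {u x : R} (hu : IsUnit u)
    (hx : x ∈ jacRad R) : IsUnit (u + x) := by
  obtain ⟨v, hv⟩ := hu
  have heq : u + x = v * (1 + (↑v⁻¹ * x)) := by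
    rw [mul_add, mul_one, ← mul_assoc, Units.mul_inv, one_mul, hv]
  rw [heq]
  exact v.isUnit.mul
    (isUnit_one_add_of_mem_jacRad ((jacRad R).mul_mem_left _ _ hx))

lemma add_mem_of_isMaxIndepSet {R : Type*} [Ring R] {A : Set R}
    (hA : IsMaxIndepSet (unitaryCayley R) A) {a j : R} (ha : a ∈ A) (hj : j ∈ jacRad R) :
    a + j ∈ A := by
  have hsym : Symmetric (fun x y : R => ¬ (unitaryCayley R).Adj x y) :=
    fun x y h h' => h h'.symm
  have hnadj : ∀ b ∈ A, ¬ (unitaryCayley R).Adj (a + j) b := by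
    rintro b hb ⟨hne, hunit⟩
    by_cases hab : a = b
    · subst hab
      have : a + j - a = j := add_sub_cancel_left a j
      rw [this] at hunit
      -- j is a unit in J; then 0 = j + (-j) is a unit, so R is subsingleton
      have h0 : IsUnit (0 : R) := by
        have := isUnit_add_of_mem_jacRad hunit ((jacRad R).neg_mem hj)
        simpa using this
      have : Subsingleton R := subsingleton_of_zero_eq_one (isUnit_zero_iff.1 h0)
      exact hne (Subsingleton.elim _ _)
    · have hAab : ¬ (unitaryCayley R).Adj a b := hA.1 ha hb hab
      apply hAab
      refine ⟨hab, ?_⟩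
      have : a - b = (a + j - b) + (-j) := by abel
      rw [this]
      exact isUnit_add_of_mem_jacRad hunit ((jacRad R).neg_mem hj)
  by_cases hmem : a + j ∈ A
  · exact hmem
  have hindep : IsIndepSet (unitaryCayley R) (insert (a + j) A) := by
    haveI : Std.Symm (fun x y : R => ¬ (unitaryCayley R).Adj x y) := ⟨fun x y h => hsym h⟩
    rw [IsIndepSet, Set.pairwise_insert_of_symm]
    exact ⟨hA.1, fun b hb _ => hnadj b hb⟩
  have := hA.2 _ hindep (Set.subset_insert _ _)
  rw [this]
  exact Set.mem_insert _ _

noncomputable def jacAddSubgroup (R : Type*) [Ring R] : AddSubgroup R where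
  carrier := jacRad R
  zero_mem' := (jacRad R).zero_mem
  add_mem' := (jacRad R).add_mem
  neg_mem' := (jacRad R).neg_mem

theorem stmt16 (R : Type*) [Ring R] [Finite R] (A B : Set R)
    (hA : IsMaxIndepSet (unitaryCayley R) A)
    (hB : IsMaxIndepSet (unitaryCayley R) B) :
    (jacRad R : Set R).ncard ∣ (A ∩ B).ncard := by
  set H := jacAddSubgroup R with hH
  set S := A ∩ B with hS
  set T : Set (R ⧸ H) := QuotientAddGroup.mk '' S with hT
  have hpre : S = QuotientAddGroup.mk ⁻¹' T := by
    apply Set.Subset.antisymm (Set.subset_preimage_image _ _)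
    rintro x ⟨s, hs, hxs⟩
    have hjs : -s + x ∈ H := by
      rw [← QuotientAddGroup.eq]
      exact hxs
    have hx : x = s + (-s + x) := (add_neg_cancel_left s x).symm
    rw [hx]
    exact ⟨add_mem_of_isMaxIndepSet hA hs.1 hjs,
      add_mem_of_isMaxIndepSet hB hs.2 hjs⟩
  have hcard : S.ncard = Nat.card H * Nat.card T := by
    rw [← Nat.card_coe_set_eq, hpre]
    rw [Nat.card_congr (QuotientAddGroup.preimageMkEquivAddSubgroupProdSet H T)]
    exact Nat.card_prod _ _
  have hJcard : (jacRad R : Set R).ncard = Nat.card H := by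
    rw [← Nat.card_coe_set_eq]
    rfl
  rw [hcard, hJcard]
  exact Dvd.intro _ rfl
end
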